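/- A connected r-regular graph X has a non-trivial efficient (j,k)-dominating function (one not constant on V(X)) for some j, k if and only if -1 is an eigenvalue of the adjacency matrix of X. -/

import Mathlib

open SimpleGraph Finset Matrix Polynomial

/-- `f` is an efficient `(j,k)`-dominating function on `G`:
it takes values in `{0,…,j}` and sums to `k` over every closed neighbourhood. -/
def EffDom {V : Type*} [Fintype V] (G : SimpleGraph V) [DecidableRel G.Adj]
    (j k : ℕ) (f : V → ℕ) : Prop :=
  (∀ v, f v ≤ j) ∧ ∀ v : V, f v + ∑ u ∈ G.neighborFinset v, f u = k

theorem stmt7 {V : Type*} [Fintype V] (G : SimpleGraph V) [DecidableRel G.Adj]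
    (r : ℕ) (hreg : G.IsRegularOfDegree r) (hconn : G.Connected) :
    (∃ (j k : ℕ) (f : V → ℕ), EffDom G j k f ∧ ¬ ∃ c : ℕ, ∀ v, f v = c) ↔
      (∃ x : V → ℚ, x ≠ 0 ∧ G.adjMatrix ℚ *ᵥ x = (-1 : ℚ) • x) := by
  constructor
  · rintro ⟨j, k, f, ⟨hj, hdom⟩, hnc⟩
    have hr1 : ((r : ℚ) + 1) ≠ 0 := by positivity
    refine ⟨fun v => (f v : ℚ) - k / (r + 1), ?_, ?_⟩
    · intro h0
      apply hnc
      have hV : Nonempty V := by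
        by_contra hV
        exact hnc ⟨0, fun v => absurd (Nonempty.intro v) hV⟩
      obtain ⟨v₀⟩ := hV
      refine ⟨f v₀, fun v => ?_⟩
      have h1 := congrFun h0 v
      have h2 := congrFun h0 v₀
      simp only [Pi.zero_apply, sub_eq_zero] at h1 h2
      exact_mod_cast h1.trans h2.symm
    · funext v
      rw [adjMatrix_mulVec_apply]
      have hs : ∑ u ∈ G.neighborFinset v, ((f u : ℚ) - k / (r + 1))
          = (∑ u ∈ G.neighborFinset v, (f u : ℚ)) - r * (k / (r + 1)) := by
        rw [Finset.sum_sub_distrib, Finset.sum_const]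
        have : (G.neighborFinset v).card = r := hreg v
        rw [this]
        ring
      rw [hs]
      have hsum : (f v : ℚ) + ∑ u ∈ G.neighborFinset v, (f u : ℚ) = k := by
        exact_mod_cast congrArg (Nat.cast : ℕ → ℚ) (hdom v)
      have : (∑ u ∈ G.neighborFinset v, (f u : ℚ)) = k - f v := by linarith
      rw [this]
      simp only [Pi.smul_apply, smul_eq_mul]
      field_simp
      ring
  · rintro ⟨x, hx0, hx⟩
    set t : ℕ := ∏ v, (x v).den with ht
    have htpos : 0 < t := Finset.prod_pos fun v _ => (x v).pos
    have hden : ∀ v, ((x v).den) ∣ t := fun v => Finset.dvd_prod_of_mem _ (mem_univ v)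
    set z : V → ℤ := fun v => (x v).num * ((t / (x v).den : ℕ) : ℤ) with hz
    have hzq : ∀ v, (z v : ℚ) = x v * t := by
      intro v
      have hd : ((x v).den : ℚ) ≠ 0 := by exact_mod_cast (x v).pos.ne'
      have h1 : ((x v).den) * (t / (x v).den) = t := Nat.mul_div_cancel' (hden v)
      have h2 : ((x v).den : ℚ) * ((t / (x v).den : ℕ) : ℚ) = (t : ℚ) := by
        exact_mod_cast congrArg (Nat.cast : ℕ → ℚ) h1
      calc (z v : ℚ) = (x v).num * ((t / (x v).den : ℕ) : ℚ) := by
              rw [hz, Int.cast_mul, Int.cast_natCast]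
        _ = ((x v).num / (x v).den) * ((x v).den * ((t / (x v).den : ℕ) : ℚ)) := by
              field_simp
        _ = x v * t := by rw [h2, Rat.num_div_den]
    set m : ℕ := Finset.univ.sup fun v => (-(z v)).toNat with hm
    have hzm : ∀ v, 0 ≤ z v + m := by
      intro v
      have h1 : (-(z v)).toNat ≤ m := Finset.le_sup (f := fun v => (-(z v)).toNat) (mem_univ v)
      have h2 : -(z v) ≤ ((-(z v)).toNat : ℤ) := Int.self_le_toNat _
      omega
    set f : V → ℕ := fun v => (z v + m).toNat with hf
    have hfq : ∀ v, (f v : ℚ) = x v * t + m := by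
      intro v
      have h3 : ((f v : ℤ)) = z v + m := by
        rw [hf]; exact_mod_cast Int.toNat_of_nonneg (hzm v)
      have h4 : ((f v : ℤ) : ℚ) = ((z v + m : ℤ) : ℚ) := by exact_mod_cast h3
      push_cast at h4
      rw [h4, hzq v]
    have hAx : ∀ v, ∑ u ∈ G.neighborFinset v, x u = -x v := by
      intro v
      have := congrFun hx v
      rw [adjMatrix_mulVec_apply] at this
      simpa using this
    refine ⟨Finset.univ.sup f, m * (r + 1), f, ⟨fun v => Finset.le_sup (mem_univ v), ?_⟩, ?_⟩
    · intro v
      have : ((f v + ∑ u ∈ G.neighborFinset v, f u : ℕ) : ℚ) = ((m * (r + 1) : ℕ) : ℚ) := by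
        push_cast
        rw [hfq v]
        rw [Finset.sum_congr rfl (fun u _ => hfq u)]
        rw [Finset.sum_add_distrib, Finset.sum_const]
        have hc : (G.neighborFinset v).card = r := hreg v
        rw [hc, ← Finset.sum_mul, hAx v]
        push_cast
        ring
      exact_mod_cast this
    · rintro ⟨c, hc⟩
      apply hx0
      have hxc : ∀ v, x v = ((c : ℚ) - m) / t := by
        intro v
        have h1 := hfq v
        rw [hc v] at h1
        have ht0 : (t : ℚ) ≠ 0 := by exact_mod_cast htpos.ne'
        field_simp
        linarith
      obtain ⟨v, hv⟩ := Function.ne_iff.mp hx0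
      have h1 := hAx v
      rw [Finset.sum_congr rfl (fun u _ => hxc u), Finset.sum_const, show #(G.neighborFinset v) = r from hreg v, hxc v] at h1
      have ht0 : (t : ℚ) ≠ 0 := by exact_mod_cast htpos.ne'
      have hcm : (c : ℚ) - m = 0 := by
        rw [nsmul_eq_mul] at h1
        have h2 : ((r:ℚ) + 1) * (((c:ℚ)-m)/t) = 0 := by linarith
        have hr1 : ((r:ℚ)+1) ≠ 0 := by positivity
        rcases mul_eq_zero.mp h2 with h | h
        · exact absurd h hr1
        · exact (div_eq_zero_iff.mp h).resolve_right ht0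
      funext u
      rw [hxc u, hcm]
      simp
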